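/- Let n, m ≥ 2 with max{n, m} ≥ 3, let G = B_{n,m} be the dumbbell graph on V = A ∪ B, and set Δ₂ = δ_NF^(2)(Δ(G)). Then every facet of δ_NF(Δ₂) = δ_NF^(3)(Δ(G)) has the form (A ∖ {x}) ∪ (B ∖ {y}) with x ∈ A and y ∈ B, where moreover x = x_1 or y = y_1. -/

import Mathlib

/-- `C` is a vertex cover of the complex with facet family `F`:
it meets every facet. -/
def IsVC {V : Type*} (F : Set (Set V)) (C : Set V) : Prop :=
  ∀ f ∈ F, (C ∩ f).Nonempty

/-- `C` is a minimal vertex cover. -/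
def IsMinVC {V : Type*} (F : Set (Set V)) (C : Set V) : Prop :=
  IsVC F C ∧ ∀ D : Set V, D ⊂ C → ¬ IsVC F D

/-- The NF-operator on facet families: the facets of `nf F` are the
complements of the minimal vertex covers of `F`. -/
def nf {V : Type*} (F : Set (Set V)) : Set (Set V) :=
  {S | ∃ C : Set V, IsMinVC F C ∧ S = Cᶜ}

/-- The dumbbell graph `B_{n,m}` as a family of edges (facets) on the vertex
set `Fin n ⊕ Fin m`: all pairs inside `A = range Sum.inl`, all pairs inside
`B = range Sum.inr`, and the bridge edge `{x₁, y₁}` (indices `0`). -/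
def dumbbell (n m : ℕ) : Set (Set (Fin n ⊕ Fin m)) :=
  {e | (∃ i j : Fin n, i ≠ j ∧ e = {Sum.inl i, Sum.inl j}) ∨
       (∃ i j : Fin m, i ≠ j ∧ e = {Sum.inr i, Sum.inr j}) ∨
       (∃ (hn : 0 < n) (hm : 0 < m), e = {Sum.inl ⟨0, hn⟩, Sum.inr ⟨0, hm⟩})}

section Aux

lemma two_le_pos {n : ℕ} (h : 2 ≤ n) : 0 < n := by omega

variable {n m : ℕ}

lemma compl_range_inl :
    (Set.range (Sum.inl : Fin n → Fin n ⊕ Fin m))ᶜ = Set.range Sum.inr := by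
  ext (a|b) <;> simp

lemma compl_range_inr :
    (Set.range (Sum.inr : Fin m → Fin n ⊕ Fin m))ᶜ = Set.range Sum.inl := by
  ext (a|b) <;> simp

lemma pair_compl (x : Fin n) (y : Fin m) :
    ({Sum.inl x, Sum.inr y} : Set (Fin n ⊕ Fin m))ᶜ
      = (Set.range Sum.inl \ {Sum.inl x}) ∪ (Set.range Sum.inr \ {Sum.inr y}) := by
  ext (a|b) <;> simp

end Aux

section Main

variable {n m : ℕ}

/-- The first NF family: complete bipartite minus the bridge. -/
def F1 (n m : ℕ) : Set (Set (Fin n ⊕ Fin m)) :=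
  {e | ∃ (x : Fin n) (y : Fin m), ¬((x : ℕ) = 0 ∧ (y : ℕ) = 0) ∧
        e = {Sum.inl x, Sum.inr y}}

lemma minvc_dumbbell (hn : 2 ≤ n) (hm : 2 ≤ m) (C : Set (Fin n ⊕ Fin m)) :
    IsMinVC (dumbbell n m) C ↔
      ∃ (x : Fin n) (y : Fin m), ¬((x : ℕ) = 0 ∧ (y : ℕ) = 0) ∧
        C = ({Sum.inl x, Sum.inr y} : Set (Fin n ⊕ Fin m))ᶜ := by
  have hn0 : 0 < n := by omega
  have hm0 : 0 < m := by omega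
  constructor
  · rintro ⟨hcov, hmin⟩
    -- covering the A-clique, B-clique, bridge
    have hA : ∀ i j : Fin n, i ≠ j → Sum.inl i ∈ C ∨ Sum.inl j ∈ C := by
      intro i j hij
      obtain ⟨v, hvC, hv⟩ := hcov _ (Or.inl ⟨i, j, hij, rfl⟩)
      rcases hv with h | h <;> subst h <;> tauto
    have hB : ∀ i j : Fin m, i ≠ j → Sum.inr i ∈ C ∨ Sum.inr j ∈ C := by
      intro i j hij
      obtain ⟨v, hvC, hv⟩ := hcov _ (Or.inr (Or.inl ⟨i, j, hij, rfl⟩))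
      rcases hv with h | h <;> subst h <;> tauto
    have hbr : Sum.inl (⟨0, hn0⟩ : Fin n) ∈ C ∨ Sum.inr (⟨0, hm0⟩ : Fin m) ∈ C := by
      obtain ⟨v, hvC, hv⟩ := hcov _ (Or.inr (Or.inr ⟨hn0, hm0, rfl⟩))
      rcases hv with h | h <;> subst h <;> tauto
    -- there is a missing vertex in A
    have hxex : ∃ x : Fin n, Sum.inl x ∉ C := by
      by_contra h
      push_neg at h
      set w : Fin n ⊕ Fin m := Sum.inl (⟨1, by omega⟩ : Fin n) with hw
      refine hmin (C \ {w}) ⟨Set.diff_subset, ?_⟩ ?_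
      · intro hsub
        have := hsub (h ⟨1, by omega⟩)
        simp [hw] at this
      · rintro f (⟨i, j, hij, rfl⟩ | ⟨i, j, hij, rfl⟩ | ⟨h1, h2, rfl⟩)
        · rcases eq_or_ne (Sum.inl i : Fin n ⊕ Fin m) w with hiw | hiw
          · refine ⟨Sum.inl j, ⟨h j, fun hc => ?_⟩, Or.inr rfl⟩
            rw [Set.mem_singleton_iff, ← hiw] at hc
            exact hij (Sum.inl_injective hc).symm
          · exact ⟨Sum.inl i, ⟨h i, by simpa using hiw⟩, Or.inl rfl⟩
        · obtain ⟨v, hvC, hv⟩ := hcov _ (Or.inr (Or.inl ⟨i, j, hij, rfl⟩))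
          refine ⟨v, ⟨hvC, ?_⟩, hv⟩
          rcases hv with h' | h' <;> subst h' <;> simp [hw]
        · refine ⟨Sum.inl ⟨0, h1⟩, ⟨h _, ?_⟩, Or.inl rfl⟩
          simp [hw, Fin.ext_iff]
    have hyex : ∃ y : Fin m, Sum.inr y ∉ C := by
      by_contra h
      push_neg at h
      set w : Fin n ⊕ Fin m := Sum.inr (⟨1, by omega⟩ : Fin m) with hw
      refine hmin (C \ {w}) ⟨Set.diff_subset, ?_⟩ ?_
      · intro hsub
        have := hsub (h ⟨1, by omega⟩)
        simp [hw] at this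
      · rintro f (⟨i, j, hij, rfl⟩ | ⟨i, j, hij, rfl⟩ | ⟨h1, h2, rfl⟩)
        · obtain ⟨v, hvC, hv⟩ := hcov _ (Or.inl ⟨i, j, hij, rfl⟩)
          refine ⟨v, ⟨hvC, ?_⟩, hv⟩
          rcases hv with h' | h' <;> subst h' <;> simp [hw]
        · rcases eq_or_ne (Sum.inr i : Fin n ⊕ Fin m) w with hiw | hiw
          · refine ⟨Sum.inr j, ⟨h j, fun hc => ?_⟩, Or.inr rfl⟩
            rw [Set.mem_singleton_iff, ← hiw] at hc
            exact hij (Sum.inr_injective hc).symm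
          · exact ⟨Sum.inr i, ⟨h i, by simpa using hiw⟩, Or.inl rfl⟩
        · refine ⟨Sum.inr ⟨0, h2⟩, ⟨h _, ?_⟩, Or.inr rfl⟩
          simp [hw, Fin.ext_iff]
    obtain ⟨x, hx⟩ := hxex
    obtain ⟨y, hy⟩ := hyex
    refine ⟨x, y, ?_, ?_⟩
    · rintro ⟨hx0, hy0⟩
      have hxe : x = (⟨0, hn0⟩ : Fin n) := Fin.ext hx0
      have hye : y = (⟨0, hm0⟩ : Fin m) := Fin.ext hy0
      rcases hbr with h | h
      · exact hx (hxe ▸ h)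
      · exact hy (hye ▸ h)
    · ext (a|b)
      · constructor
        · intro ha
          simp only [Set.mem_compl_iff, Set.mem_insert_iff, Set.mem_singleton_iff]
          push_neg
          refine ⟨fun h' => ?_, by simp⟩
          rw [h'] at ha; exact hx ha
        · intro ha
          simp only [Set.mem_compl_iff, Set.mem_insert_iff, Set.mem_singleton_iff] at ha
          push_neg at ha
          have hax : a ≠ x := fun h => ha.1 (by rw [h])
          rcases hA a x hax with h | h
          · exact h
          · exact absurd h hx
      · constructor
        · intro hb
          simp only [Set.mem_compl_iff, Set.mem_insert_iff, Set.mem_singleton_iff]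
          push_neg
          refine ⟨by simp, fun h' => ?_⟩
          rw [h'] at hb; exact hy hb
        · intro hb
          simp only [Set.mem_compl_iff, Set.mem_insert_iff, Set.mem_singleton_iff] at hb
          push_neg at hb
          have hby : b ≠ y := fun h => hb.2 (by rw [h])
          rcases hB b y hby with h | h
          · exact h
          · exact absurd h hy
  · rintro ⟨x, y, hxy, rfl⟩
    constructor
    · rintro f (⟨i, j, hij, rfl⟩ | ⟨i, j, hij, rfl⟩ | ⟨h1, h2, rfl⟩)
      · rcases eq_or_ne i x with rfl | hix
        · exact ⟨Sum.inl j, by simp [Ne.symm hij], Or.inr rfl⟩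
        · exact ⟨Sum.inl i, by simp [hix], Or.inl rfl⟩
      · rcases eq_or_ne i y with rfl | hiy
        · exact ⟨Sum.inr j, by simp [Ne.symm hij], Or.inr rfl⟩
        · exact ⟨Sum.inr i, by simp [hiy], Or.inl rfl⟩
      · rcases Nat.eq_zero_or_pos (x : ℕ) with hx0 | hx0
        · have hy0 : (y : ℕ) ≠ 0 := fun h => hxy ⟨hx0, h⟩
          refine ⟨Sum.inr ⟨0, h2⟩, by simp [Fin.ext_iff, Ne.symm hy0], Or.inr rfl⟩
        · refine ⟨Sum.inl ⟨0, h1⟩, by simp [Fin.ext_iff, (by omega : (x:ℕ) ≠ 0).symm], Or.inl rfl⟩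
    · intro D hD hDvc
      rw [Set.ssubset_def] at hD
      obtain ⟨hsub, hns⟩ := hD
      rw [Set.not_subset] at hns
      obtain ⟨v, hvC, hvD⟩ := hns
      simp only [Set.mem_compl_iff, Set.mem_insert_iff, Set.mem_singleton_iff] at hvC
      push_neg at hvC
      match v with
      | Sum.inl i =>
        have hix : i ≠ x := fun h => hvC.1 (by rw [h])
        obtain ⟨w, hwD, hw⟩ := hDvc _ (Or.inl ⟨i, x, hix, rfl⟩)
        rcases hw with rfl | rfl
        · exact hvD hwD
        · have := hsub hwD; simp at this
      | Sum.inr j =>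
        have hjy : j ≠ y := fun h => hvC.2 (by rw [h])
        obtain ⟨w, hwD, hw⟩ := hDvc _ (Or.inr (Or.inl ⟨j, y, hjy, rfl⟩))
        rcases hw with rfl | rfl
        · exact hvD hwD
        · have := hsub hwD; simp at this

end Main
section Main2

variable {n m : ℕ}

lemma nf_dumbbell (hn : 2 ≤ n) (hm : 2 ≤ m) :
    nf (dumbbell n m) = F1 n m := by
  ext S
  constructor
  · rintro ⟨C, hC, rfl⟩
    obtain ⟨x, y, hxy, rfl⟩ := (minvc_dumbbell hn hm C).mp hC
    exact ⟨x, y, hxy, compl_compl _⟩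
  · rintro ⟨x, y, hxy, rfl⟩
    exact ⟨({Sum.inl x, Sum.inr y} : Set (Fin n ⊕ Fin m))ᶜ,
      (minvc_dumbbell hn hm _).mpr ⟨x, y, hxy, rfl⟩,
      (compl_compl ({Sum.inl x, Sum.inr y} : Set (Fin n ⊕ Fin m))).symm⟩

lemma minvc_F1 (hn : 2 ≤ n) (hm : 2 ≤ m) (C : Set (Fin n ⊕ Fin m)) :
    IsMinVC (F1 n m) C ↔
      C = Set.range Sum.inl ∨ C = Set.range Sum.inr ∨
      C = ({Sum.inl (⟨0, two_le_pos hn⟩ : Fin n), Sum.inr (⟨0, two_le_pos hm⟩ : Fin m)} :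
            Set (Fin n ⊕ Fin m))ᶜ := by
  have hn0 : 0 < n := by omega
  have hm0 : 0 < m := by omega
  constructor
  · rintro ⟨hcov, hmin⟩
    have hE : ∀ (x : Fin n) (y : Fin m), ¬((x : ℕ) = 0 ∧ (y : ℕ) = 0) →
        Sum.inl x ∈ C ∨ Sum.inr y ∈ C := by
      intro x y hxy
      obtain ⟨v, hvC, hv⟩ := hcov _ ⟨x, y, hxy, rfl⟩
      rcases hv with h | h <;> subst h <;> tauto
    by_cases hAC : ∀ x : Fin n, Sum.inl x ∈ C
    · left
      have hnr : ∀ j : Fin m, Sum.inr j ∉ C := by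
        intro j hj
        refine hmin (C \ {Sum.inr j})
          ⟨Set.diff_subset, fun hsub => by have := hsub hj; simp at this⟩ ?_
        rintro f ⟨x, y, hxy, rfl⟩
        exact ⟨Sum.inl x, ⟨hAC x, by simp⟩, Or.inl rfl⟩
      ext (a | b)
      · simp [hAC a]
      · simp [hnr b]
    by_cases hBC : ∀ y : Fin m, Sum.inr y ∈ C
    · right; left
      have hnl : ∀ i : Fin n, Sum.inl i ∉ C := by
        intro i hi
        refine hmin (C \ {Sum.inl i})
          ⟨Set.diff_subset, fun hsub => by have := hsub hi; simp at this⟩ ?_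
        rintro f ⟨x, y, hxy, rfl⟩
        exact ⟨Sum.inr y, ⟨hBC y, by simp⟩, Or.inr rfl⟩
      ext (a | b)
      · simp [hnl a]
      · simp [hBC b]
    · right; right
      push_neg at hAC hBC
      obtain ⟨x, hx⟩ := hAC
      obtain ⟨y, hy⟩ := hBC
      have hx0 : (x : ℕ) = 0 := by
        by_contra hx0
        have : ∀ y' : Fin m, Sum.inr y' ∈ C := by
          intro y'
          rcases hE x y' (fun h => hx0 h.1) with h | h
          · exact absurd h hx
          · exact h
        exact hy (this y)
      have hy0 : (y : ℕ) = 0 := by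
        by_contra hy0
        have : ∀ x' : Fin n, Sum.inl x' ∈ C := by
          intro x'
          rcases hE x' y (fun h => hy0 h.2) with h | h
          · exact h
          · exact absurd h hy
        exact hx (this x)
      have hxe : x = (⟨0, hn0⟩ : Fin n) := Fin.ext hx0
      have hye : y = (⟨0, hm0⟩ : Fin m) := Fin.ext hy0
      subst hxe hye
      have hl : ∀ i : Fin n, (i : ℕ) ≠ 0 → Sum.inl i ∈ C := by
        intro i hi
        rcases hE i ⟨0, hm0⟩ (fun h => hi h.1) with h | h
        · exact h
        · exact absurd h hy
      have hr : ∀ j : Fin m, (j : ℕ) ≠ 0 → Sum.inr j ∈ C := by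
        intro j hj
        rcases hE ⟨0, hn0⟩ j (fun h => hj h.2) with h | h
        · exact absurd h hx
        · exact h
      ext (a | b)
      · by_cases ha : (a : ℕ) = 0
        · have : a = (⟨0, hn0⟩ : Fin n) := Fin.ext ha
          subst this
          simp [hx]
        · simp only [Set.mem_compl_iff, Set.mem_insert_iff, Set.mem_singleton_iff]
          have : ¬((Sum.inl a : Fin n ⊕ Fin m) = Sum.inl (⟨0, hn0⟩ : Fin n) ∨
              (Sum.inl a : Fin n ⊕ Fin m) = Sum.inr (⟨0, hm0⟩ : Fin m)) := by
            rintro (h | h)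
            · exact ha (by rw [Sum.inl_injective h])
            · exact Sum.inl_ne_inr h
          exact iff_of_true (hl a ha) this
      · by_cases hb : (b : ℕ) = 0
        · have : b = (⟨0, hm0⟩ : Fin m) := Fin.ext hb
          subst this
          simp [hy]
        · simp only [Set.mem_compl_iff, Set.mem_insert_iff, Set.mem_singleton_iff]
          have : ¬((Sum.inr b : Fin n ⊕ Fin m) = Sum.inl (⟨0, hn0⟩ : Fin n) ∨
              (Sum.inr b : Fin n ⊕ Fin m) = Sum.inr (⟨0, hm0⟩ : Fin m)) := by
            rintro (h | h)
            · exact Sum.inr_ne_inl h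
            · exact hb (by rw [Sum.inr_injective h])
          exact iff_of_true (hr b hb) this
  · rintro (rfl | rfl | rfl)
    · constructor
      · rintro f ⟨x, y, hxy, rfl⟩
        exact ⟨Sum.inl x, ⟨x, rfl⟩, Or.inl rfl⟩
      · intro D hD hDvc
        rw [Set.ssubset_def] at hD
        obtain ⟨hsub, hns⟩ := hD
        rw [Set.not_subset] at hns
        obtain ⟨v, hvC, hvD⟩ := hns
        obtain ⟨i, rfl⟩ := hvC
        by_cases hi : (i : ℕ) = 0
        · obtain ⟨w, hwD, hw⟩ := hDvc _ ⟨i, ⟨1, by omega⟩, by simp [hi], rfl⟩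
          rcases hw with rfl | rfl
          · exact hvD hwD
          · have := hsub hwD; simp at this
        · obtain ⟨w, hwD, hw⟩ := hDvc _ ⟨i, ⟨0, hm0⟩, fun h => hi h.1, rfl⟩
          rcases hw with rfl | rfl
          · exact hvD hwD
          · have := hsub hwD; simp at this
    · constructor
      · rintro f ⟨x, y, hxy, rfl⟩
        exact ⟨Sum.inr y, ⟨y, rfl⟩, Or.inr rfl⟩
      · intro D hD hDvc
        rw [Set.ssubset_def] at hD
        obtain ⟨hsub, hns⟩ := hD
        rw [Set.not_subset] at hns
        obtain ⟨v, hvC, hvD⟩ := hns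
        obtain ⟨j, rfl⟩ := hvC
        by_cases hj : (j : ℕ) = 0
        · obtain ⟨w, hwD, hw⟩ := hDvc _ ⟨⟨1, by omega⟩, j, by simp, rfl⟩
          rcases hw with rfl | rfl
          · have := hsub hwD; simp at this
          · exact hvD hwD
        · obtain ⟨w, hwD, hw⟩ := hDvc _ ⟨⟨0, hn0⟩, j, fun h => hj h.2, rfl⟩
          rcases hw with rfl | rfl
          · have := hsub hwD; simp at this
          · exact hvD hwD
    · constructor
      · rintro f ⟨x, y, hxy, rfl⟩
        by_cases hx : (x : ℕ) = 0
        · have hy : (y : ℕ) ≠ 0 := fun h => hxy ⟨hx, h⟩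
          refine ⟨Sum.inr y, ?_, Or.inr rfl⟩
          simp only [Set.mem_compl_iff, Set.mem_insert_iff, Set.mem_singleton_iff]
          rintro (h | h)
          · exact Sum.inr_ne_inl h
          · exact hy (by rw [Sum.inr_injective h])
        · refine ⟨Sum.inl x, ?_, Or.inl rfl⟩
          simp only [Set.mem_compl_iff, Set.mem_insert_iff, Set.mem_singleton_iff]
          rintro (h | h)
          · exact hx (by rw [Sum.inl_injective h])
          · exact Sum.inl_ne_inr h
      · intro D hD hDvc
        rw [Set.ssubset_def] at hD
        obtain ⟨hsub, hns⟩ := hD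
        rw [Set.not_subset] at hns
        obtain ⟨v, hvC, hvD⟩ := hns
        simp only [Set.mem_compl_iff, Set.mem_insert_iff, Set.mem_singleton_iff] at hvC
        push_neg at hvC
        match v with
        | Sum.inl i =>
          have hi : (i : ℕ) ≠ 0 := fun h =>
            hvC.1 (congrArg Sum.inl (Fin.ext h))
          obtain ⟨w, hwD, hw⟩ := hDvc _ ⟨i, ⟨0, hm0⟩, fun h => hi h.1, rfl⟩
          rcases hw with rfl | rfl
          · exact hvD hwD
          · have h2 := hsub hwD
            simp at h2
        | Sum.inr j =>
          have hj : (j : ℕ) ≠ 0 := fun h =>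
            hvC.2 (congrArg Sum.inr (Fin.ext h))
          obtain ⟨w, hwD, hw⟩ := hDvc _ ⟨⟨0, hn0⟩, j, fun h => hj h.2, rfl⟩
          rcases hw with rfl | rfl
          · have h2 := hsub hwD
            simp at h2
          · exact hvD hwD

end Main2
section Main3

variable {n m : ℕ}

/-- The second NF family. -/
def F2 (n m : ℕ) (hn0 : 0 < n) (hm0 : 0 < m) : Set (Set (Fin n ⊕ Fin m)) :=
  {Set.range Sum.inr, Set.range Sum.inl,
    ({Sum.inl ⟨0, hn0⟩, Sum.inr ⟨0, hm0⟩} : Set (Fin n ⊕ Fin m))}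

lemma nf_F1 (hn : 2 ≤ n) (hm : 2 ≤ m) :
    nf (F1 n m) = F2 n m (two_le_pos hn) (two_le_pos hm) := by
  have hn0 : 0 < n := by omega
  have hm0 : 0 < m := by omega
  ext S
  constructor
  · rintro ⟨C, hC, rfl⟩
    rcases (minvc_F1 hn hm C).mp hC with rfl | rfl | rfl
    · exact Or.inl compl_range_inl
    · exact Or.inr (Or.inl compl_range_inr)
    · exact Or.inr (Or.inr (compl_compl _))
  · rintro (rfl | rfl | rfl)
    · exact ⟨Set.range Sum.inl, (minvc_F1 hn hm _).mpr (Or.inl rfl),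
        compl_range_inl.symm⟩
    · exact ⟨Set.range Sum.inr, (minvc_F1 hn hm _).mpr (Or.inr (Or.inl rfl)),
        compl_range_inr.symm⟩
    · exact ⟨({Sum.inl (⟨0, hn0⟩ : Fin n), Sum.inr (⟨0, hm0⟩ : Fin m)} :
          Set (Fin n ⊕ Fin m))ᶜ,
        (minvc_F1 hn hm _).mpr (Or.inr (Or.inr rfl)),
        (compl_compl _).symm⟩

end Main3


/-- For `n, m ≥ 2` with `max{n,m} ≥ 3`, every facet of
`δ_NF^(3)(Δ(B_{n,m})) = δ_NF(Δ₂)` is of the form `(A ∖ {x}) ∪ (B ∖ {y})`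
with `x ∈ A`, `y ∈ B`, and at least one of `x, y` a bridge endpoint
(`x = x₁` or `y = y₁`). -/
theorem dumbbell_nf_three_facets (n m : ℕ) (hn : 2 ≤ n) (hm : 2 ≤ m)
    (h3 : 3 ≤ max n m) (S : Set (Fin n ⊕ Fin m))
    (hS : S ∈ nf^[3] (dumbbell n m)) :
    ∃ (x : Fin n) (y : Fin m),
      (x = (⟨0, by omega⟩ : Fin n) ∨ y = (⟨0, by omega⟩ : Fin m)) ∧
      S = (Set.range Sum.inl \ {Sum.inl x}) ∪
          (Set.range Sum.inr \ {Sum.inr y}) := by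
  have hn0 : 0 < n := by omega
  have hm0 : 0 < m := by omega
  simp only [Function.iterate_succ, Function.iterate_zero, Function.comp_apply,
    id_eq] at hS
  rw [nf_dumbbell hn hm, nf_F1 hn hm] at hS
  obtain ⟨C, ⟨hcov, hmin⟩, rfl⟩ := hS
  -- C meets A, meets B, and contains a bridge endpoint
  obtain ⟨va, hvaC, a, rfl⟩ := hcov (Set.range Sum.inl)
    (Or.inr (Or.inl rfl))
  obtain ⟨vb, hvbC, b, hvb⟩ := hcov (Set.range Sum.inr) (Or.inl rfl)
  subst hvb
  obtain ⟨v, hvC, hv⟩ := hcov _ (Or.inr (Or.inr rfl))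
  rcases hv with rfl | rfl
  · -- x₁ ∈ C
    set D : Set (Fin n ⊕ Fin m) :=
      {Sum.inl ⟨0, hn0⟩, Sum.inr b} with hD
    have hDC : D ⊆ C := by
      rintro w (rfl | rfl)
      · exact hvC
      · exact hvbC
    have hDvc : IsVC (F2 n m hn0 hm0) D := by
      rintro f (rfl | rfl | rfl)
      · exact ⟨Sum.inr b, Or.inr rfl, b, rfl⟩
      · exact ⟨Sum.inl ⟨0, hn0⟩, Or.inl rfl, ⟨0, hn0⟩, rfl⟩
      · exact ⟨Sum.inl ⟨0, hn0⟩, Or.inl rfl, Or.inl rfl⟩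
    have hCD : C = D := by
      by_contra hne
      exact hmin D (hDC.ssubset_of_ne (fun h => hne h.symm)) hDvc
    refine ⟨⟨0, hn0⟩, b, Or.inl rfl, ?_⟩
    rw [hCD, hD, pair_compl]
  · -- y₁ ∈ C
    set D : Set (Fin n ⊕ Fin m) :=
      {Sum.inl a, Sum.inr ⟨0, hm0⟩} with hD
    have hDC : D ⊆ C := by
      rintro w (rfl | rfl)
      · exact hvaC
      · exact hvC
    have hDvc : IsVC (F2 n m hn0 hm0) D := by
      rintro f (rfl | rfl | rfl)
      · exact ⟨Sum.inr ⟨0, hm0⟩, Or.inr rfl, ⟨0, hm0⟩, rfl⟩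
      · exact ⟨Sum.inl a, Or.inl rfl, a, rfl⟩
      · exact ⟨Sum.inr ⟨0, hm0⟩, Or.inr rfl, Or.inr rfl⟩
    have hCD : C = D := by
      by_contra hne
      exact hmin D (hDC.ssubset_of_ne (fun h => hne h.symm)) hDvc
    refine ⟨a, ⟨0, hm0⟩, Or.inr rfl, ?_⟩
    rw [hCD, hD, pair_compl]
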